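/- Let P be a finite poset with n elements and let B ⊆ E be a set of edges of P̂ such that the undirected graph on vertex set P̂ with edge set B is acyclic and has exactly two connected components, with 0̂ and 1̂ lying in different components. Then |B| = n and the family (δ(e))_{e ∈ B} is a ℤ-basis of the free abelian group ℤ^P. -/

import Mathlib

/-- The bounded poset `P̂ = 0̂ ⊕ P ⊕ 1̂`. -/
abbrev Phat (P : Type*) := WithBot (WithTop P)

/-- The inclusion `P → P̂`. -/
def toHat {P : Type*} (u : P) : Phat P := ((u : WithTop P) : Phat P)

/-- `χ_w ∈ ℤ^P` for `w ∈ P̂`: the standard basis vector for `w ∈ P`, and `0` for `0̂, 1̂`. -/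
def chiHat {P : Type*} [DecidableEq P] : Phat P → (P → ℤ) :=
  WithBot.recBotCoe 0 (WithTop.recTopCoe 0 (fun v => Pi.single v 1))

/-- `δ(e) = χ_{t(e)} − χ_{s(e)} ∈ ℤ^P` for an edge `e = (t(e), s(e))` of `P̂`. -/
def deltaVec {P : Type*} [DecidableEq P] (e : Phat P × Phat P) : P → ℤ :=
  chiHat e.1 - chiHat e.2

section Aux

variable {P : Type*} [DecidableEq P]

lemma chiHat_bot : chiHat (⊥ : Phat P) = 0 := rfl

lemma chiHat_top : chiHat (⊤ : Phat P) = 0 := rfl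

lemma chiHat_toHat (p : P) : chiHat (toHat p) = Pi.single p 1 := rfl

lemma phat_cases (w : Phat P) : w = ⊥ ∨ w = ⊤ ∨ ∃ p : P, w = toHat p := by
  induction w using WithBot.recBotCoe with
  | bot => exact Or.inl rfl
  | coe x =>
    induction x using WithTop.recTopCoe with
    | top => exact Or.inr (Or.inl rfl)
    | coe p => exact Or.inr (Or.inr ⟨p, rfl⟩)

end Aux

/-- Let `B` be a set of edges of `P̂` such that the corresponding undirected graph on
`P̂` is acyclic and has exactly two connected components, separating `0̂` from `1̂`.
Then `|B| = |P|` and the family `(δ(e))_{e ∈ B}` is a `ℤ`-basis of `ℤ^P`. -/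
theorem deltaVec_basis_of_two_trees (P : Type*) [PartialOrder P] [Fintype P]
    [DecidableEq P] (B : Set (Phat P × Phat P))
    (hB : ∀ e ∈ B, e.1 ⋖ e.2)
    (hacyclic : (SimpleGraph.fromRel fun a b => (a, b) ∈ B).IsAcyclic)
    (hsep : ¬ (SimpleGraph.fromRel fun a b => (a, b) ∈ B).Reachable
      (⊥ : Phat P) (⊤ : Phat P))
    (hcover : ∀ a : Phat P,
      (SimpleGraph.fromRel fun a b => (a, b) ∈ B).Reachable a (⊥ : Phat P) ∨
      (SimpleGraph.fromRel fun a b => (a, b) ∈ B).Reachable a (⊤ : Phat P)) :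
    B.ncard = Fintype.card P ∧
    LinearIndependent ℤ (fun e : B => deltaVec (e : Phat P × Phat P)) ∧
    Submodule.span ℤ (deltaVec '' B) = (⊤ : Submodule ℤ (P → ℤ)) := by
  classical
  set G : SimpleGraph (Phat P) := SimpleGraph.fromRel fun a b => (a, b) ∈ B with hGdef
  -- Spanning
  have hspan_reach : ∀ a b : Phat P, G.Reachable a b →
      chiHat a - chiHat b ∈ Submodule.span ℤ (deltaVec '' B) := by
    intro a b hr
    obtain ⟨w⟩ := hr
    induction w with
    | nil => simpa using (Submodule.span ℤ (deltaVec '' B)).zero_mem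
    | @cons x y z hxy p ih =>
      have h1 : chiHat x - chiHat y ∈ Submodule.span ℤ (deltaVec '' B) := by
        rw [hGdef, SimpleGraph.fromRel_adj] at hxy
        rcases hxy.2 with h | h
        · exact Submodule.subset_span ⟨(x, y), h, rfl⟩
        · have hm : deltaVec (y, x) ∈ Submodule.span ℤ (deltaVec '' B) :=
            Submodule.subset_span ⟨(y, x), h, rfl⟩
          have heq : chiHat x - chiHat y = -(deltaVec (y, x)) := by
            simp [deltaVec]
          rw [heq]
          exact neg_mem hm
      have := add_mem h1 ih
      simpa [sub_add_sub_cancel] using this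
  have hspan : Submodule.span ℤ (deltaVec '' B) = (⊤ : Submodule ℤ (P → ℤ)) := by
    rw [eq_top_iff]
    have hsingle : ∀ p : P, (Pi.single p 1 : P → ℤ) ∈ Submodule.span ℤ (deltaVec '' B) := by
      intro p
      rcases hcover (toHat p) with h | h
      · have := hspan_reach _ _ h
        simpa [chiHat_bot, chiHat_toHat] using this
      · have := hspan_reach _ _ h
        simpa [chiHat_top, chiHat_toHat] using this
    rw [← (Pi.basisFun ℤ P).span_eq, Submodule.span_le]
    rintro f ⟨i, rfl⟩
    simpa using hsingle i
  -- Setup for linear independence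
  have hadj : ∀ e ∈ B, G.Adj e.1 e.2 := by
    intro e he
    rw [hGdef, SimpleGraph.fromRel_adj]
    exact ⟨(hB e he).ne, Or.inl he⟩
  have hbridge : ∀ e ∈ B,
      ¬ (G \ SimpleGraph.fromEdgeSet {s(e.1, e.2)}).Reachable e.1 e.2 := by
    intro e he
    have := (SimpleGraph.isAcyclic_iff_forall_adj_isBridge.mp hacyclic) (hadj e he)
    exact SimpleGraph.isBridge_iff.mp this
  have hle : ∀ e : Phat P × Phat P, (G \ SimpleGraph.fromEdgeSet {s(e.1, e.2)}) ≤ G :=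
    fun e => sdiff_le
  -- key linear independence computation
  haveI : Fintype (Phat P) := instFintypeOption (α := Option P)
  haveI : Fintype (↥B) := Fintype.ofFinite _
  have hli : LinearIndependent ℤ (fun e : B => deltaVec (e : Phat P × Phat P)) := by
    rw [Fintype.linearIndependent_iff]
    intro g hg e
    set G' : SimpleGraph (Phat P) :=
      G \ SimpleGraph.fromEdgeSet {s((e : Phat P × Phat P).1, (e : Phat P × Phat P).2)}
      with hG'def
    have hbr : ¬ G'.Reachable (e : Phat P × Phat P).1 (e : Phat P × Phat P).2 := hbridge e e.2
    have hmono : ∀ a b : Phat P, G'.Reachable a b → G.Reachable a b :=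
      fun a b h => h.mono (hle e)
    have hadjE : G.Reachable (e : Phat P × Phat P).1 (e : Phat P × Phat P).2 :=
      (hadj e e.2).toWalk.reachable
    -- choose side vertex c
    have hexist : ∃ c, (c = (e : Phat P × Phat P).1 ∨ c = (e : Phat P × Phat P).2) ∧
        ¬ G'.Reachable ⊥ c ∧ ¬ G'.Reachable ⊤ c := by
      by_cases h1 : G'.Reachable ⊥ (e : Phat P × Phat P).1 ∨
          G'.Reachable ⊤ (e : Phat P × Phat P).1
      · refine ⟨(e : Phat P × Phat P).2, Or.inr rfl, ?_, ?_⟩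
        · intro hb
          rcases h1 with h | h
          · exact hbr (h.symm.trans hb)
          · exact hsep (((hmono _ _ hb).trans hadjE.symm).trans (hmono _ _ h).symm)
        · intro ht
          rcases h1 with h | h
          · exact hsep (((hmono _ _ h).trans hadjE).trans (hmono _ _ ht).symm)
          · exact hbr (h.symm.trans ht)
      · push_neg at h1
        exact ⟨(e : Phat P × Phat P).1, Or.inl rfl, h1.1, h1.2⟩
    obtain ⟨c, hc12, hcb, hct⟩ := hexist
    have hcnb : c ≠ ⊥ := fun h => hcb (h ▸ SimpleGraph.Reachable.refl _)
    have hcnt : c ≠ ⊤ := fun h => hct (h ▸ SimpleGraph.Reachable.refl _)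
    -- the side of the cut containing c
    set S : Finset P := Finset.univ.filter (fun q => G'.Reachable (toHat q) c) with hSdef
    set ind : Phat P → ℤ := fun w => ∑ q ∈ S, chiHat w q with hinddef
    have hind_bot : ind (⊥ : Phat P) = 0 := by simp [hinddef, chiHat_bot]
    have hind_top : ind (⊤ : Phat P) = 0 := by simp [hinddef, chiHat_top]
    have hind_toHat : ∀ p : P, ind (toHat p) = if G'.Reachable (toHat p) c then 1 else 0 := by
      intro p
      simp only [hinddef, chiHat_toHat, Pi.single_apply]
      rw [Finset.sum_ite_eq' S p (fun _ => (1 : ℤ))]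
      simp [hSdef]
    have hind_not_reach : ∀ p : P, ¬ G'.Reachable (toHat p) c → ind (toHat p) = 0 := by
      intro p hp; rw [hind_toHat p, if_neg hp]
    -- the functional applied to deltaVec e'
    have hval : ∀ e' : ↥B, ∑ q ∈ S, deltaVec (e' : Phat P × Phat P) q =
        ind (e' : Phat P × Phat P).1 - ind (e' : Phat P × Phat P).2 := by
      intro e'
      simp only [hinddef, deltaVec, Pi.sub_apply, Finset.sum_sub_distrib]
    -- edges different from e remain in G'
    have hadj' : ∀ e' : ↥B, e' ≠ e →
        G'.Adj (e' : Phat P × Phat P).1 (e' : Phat P × Phat P).2 := by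
      intro e' hne
      rw [hG'def, SimpleGraph.sdiff_adj]
      refine ⟨hadj e' e'.2, ?_⟩
      rw [SimpleGraph.fromEdgeSet_adj]
      rintro ⟨hmem, -⟩
      simp only [Set.mem_singleton_iff, Sym2.eq_iff] at hmem
      rcases hmem with ⟨h1, h2⟩ | ⟨h1, h2⟩
      · exact hne (Subtype.ext (Prod.ext h1 h2))
      · have hlt1 := (hB _ e'.2).lt
        have hlt2 := (hB _ e.2).lt
        rw [h1, h2] at hlt1
        exact absurd (hlt1.trans hlt2) (lt_irrefl _)
    -- coefficient of e' ≠ e vanishes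
    have hzero : ∀ e' : ↥B, e' ≠ e →
        ind (e' : Phat P × Phat P).1 - ind (e' : Phat P × Phat P).2 = 0 := by
      intro e' hne
      have hadjG' := hadj' e' hne
      rcases phat_cases (e' : Phat P × Phat P).1 with h1 | h1 | ⟨p, h1⟩
      · -- first endpoint is ⊥
        rcases phat_cases (e' : Phat P × Phat P).2 with h2 | h2 | ⟨q, h2⟩
        · exact absurd ((hB _ e'.2).lt) (by rw [h1, h2]; exact lt_irrefl _)
        · rw [h1, h2, hind_bot, hind_top]; ring
        · have hnq : ¬ G'.Reachable (toHat q) c := by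
            rw [h1, h2] at hadjG'
            exact fun hq => hcb (hadjG'.toWalk.reachable.trans hq)
          rw [h1, h2, hind_bot, hind_not_reach q hnq]; ring
      · -- first endpoint is ⊤ : impossible
        exact absurd ((hB _ e'.2).lt) (by rw [h1]; exact not_top_lt)
      · rcases phat_cases (e' : Phat P × Phat P).2 with h2 | h2 | ⟨q, h2⟩
        · exact absurd ((hB _ e'.2).lt) (by rw [h2]; exact not_lt_bot)
        · -- second endpoint is ⊤
          have hnp : ¬ G'.Reachable (toHat p) c := by
            rw [h1, h2] at hadjG'
            exact fun hp => hct (hadjG'.symm.toWalk.reachable.trans hp)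
          rw [h1, h2, hind_top, hind_not_reach p hnp]; ring
        · rw [h1, h2] at hadjG'
          rw [h1, h2, hind_toHat p, hind_toHat q]
          have hreq : G'.Reachable (toHat p) c ↔ G'.Reachable (toHat q) c :=
            ⟨fun h => hadjG'.symm.toWalk.reachable.trans h,
             fun h => hadjG'.toWalk.reachable.trans h⟩
          by_cases hp : G'.Reachable (toHat p) c
          · rw [if_pos hp, if_pos (hreq.mp hp)]; ring
          · rw [if_neg hp, if_neg (fun hq => hp (hreq.mpr hq))]; ring
    -- coefficient of e is ±1
    obtain ⟨p0, hp0⟩ : ∃ p : P, c = toHat p := by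
      rcases phat_cases c with h | h | h
      · exact absurd h hcnb
      · exact absurd h hcnt
      · exact h
    have hindc : ind c = 1 := by
      rw [hp0, hind_toHat p0, if_pos (hp0 ▸ SimpleGraph.Reachable.refl _)]
    have hother : ∀ d : Phat P,
        (d = (e : Phat P × Phat P).1 ∨ d = (e : Phat P × Phat P).2) →
        d ≠ c → ind d = 0 := by
      intro d hd hdc
      have hdnr : ¬ G'.Reachable d c := by
        intro hr
        rcases hd with hd | hd <;> rcases hc12 with hc | hc
        · exact absurd (hd.trans hc.symm) hdc
        · rw [hd, hc] at hr; exact hbr hr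
        · rw [hd, hc] at hr; exact hbr hr.symm
        · exact absurd (hd.trans hc.symm) hdc
      rcases phat_cases d with h | h | ⟨q, h⟩
      · rw [h, hind_bot]
      · rw [h, hind_top]
      · rw [h] at hdnr ⊢; exact hind_not_reach q hdnr
    have hne12 : (e : Phat P × Phat P).1 ≠ (e : Phat P × Phat P).2 := (hB _ e.2).ne
    have hone : ind (e : Phat P × Phat P).1 - ind (e : Phat P × Phat P).2 = 1 ∨
        ind (e : Phat P × Phat P).1 - ind (e : Phat P × Phat P).2 = -1 := by
      rcases hc12 with hc | hc
      · left
        rw [← hc, hindc,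
          hother (e : Phat P × Phat P).2 (Or.inr rfl) (by rw [hc]; exact hne12.symm)]
        ring
      · right
        rw [← hc, hindc,
          hother (e : Phat P × Phat P).1 (Or.inl rfl) (by rw [hc]; exact hne12)]
        ring
    -- apply the functional to the linear relation
    have h0 : ∑ i : ↥B, g i * (∑ q ∈ S, deltaVec (i : Phat P × Phat P) q) = 0 := by
      have := congrArg (fun f : P → ℤ => ∑ q ∈ S, f q) hg
      simp only [Finset.sum_apply, Pi.smul_apply, smul_eq_mul, Pi.zero_apply,
        Finset.sum_const_zero] at this
      rw [Finset.sum_comm] at this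
      simpa [Finset.mul_sum] using this
    rw [Finset.sum_eq_single e (fun i _ hi => by rw [hval i, hzero i hi, mul_zero])
      (fun h => absurd (Finset.mem_univ e) h)] at h0
    rw [hval e] at h0
    rcases hone with h | h
    · rw [h, mul_one] at h0; exact h0
    · rw [h] at h0; omega
  -- conclude
  refine ⟨?_, hli, hspan⟩
  haveI : Fintype (↥B) := Fintype.ofFinite _
  have hb : Nonempty (Module.Basis (↥B) ℤ (P → ℤ)) := by
    refine ⟨Module.Basis.mk hli ?_⟩
    rw [show Set.range (fun e : B => deltaVec (e : Phat P × Phat P)) = deltaVec '' B by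
      rw [Set.image_eq_range]]
    rw [hspan]
  obtain ⟨b⟩ := hb
  have h1 : Module.finrank ℤ (P → ℤ) = Fintype.card (↥B) :=
    Module.finrank_eq_card_basis b
  have h2 : Module.finrank ℤ (P → ℤ) = Fintype.card P := Module.finrank_pi ℤ
  rw [Set.ncard_eq_toFinset_card', Set.toFinset_card, ← h1, h2]
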